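/- Let D = {(z,w) ∈ ℂ^{n₀}×ℂ^{n₁}×⋯×ℂ^{n_l} : Σⱼ ‖w_{(j)}‖^{2pⱼ} < e^{-μ‖z‖²}} be a generalized Fock-Bargmann-Hartogs domain. For each point (z₀, w₀) of the boundary stratum b₀D (where Σⱼ ‖w_{(j)0}‖^{2pⱼ} = e^{-μ‖z₀‖²} and w_{(j)0} ≠ 0 for all j with pⱼ ≠ 1), the Levi form of the defining function ρ(z,w) = Σⱼ ‖w_{(j)}‖^{2pⱼ} - e^{-μ‖z‖²} is positive definite on the complex tangent space at (z₀,w₀); hence D is strongly pseudoconvex at every point of b₀D. -/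
import Mathlib


open MeasureTheory Real ComplexInnerProductSpace

/-- The Levi form of the defining function
`ρ(z,w) = Σₖ ‖w_{(k)}‖^{2pₖ} - e^{-μ‖z‖²}` at a point `(z₀,w₀)`, evaluated on a
tangent vector `T = (ζ, η)`. -/
noncomputable def leviForm (n₀ l : ℕ) (n : Fin l → ℕ) (p : Fin l → ℝ) (μ : ℝ)
    (z₀ : EuclideanSpace ℂ (Fin n₀)) (w₀ : (i : Fin l) → EuclideanSpace ℂ (Fin (n i)))
    (ζ : EuclideanSpace ℂ (Fin n₀)) (η : (i : Fin l) → EuclideanSpace ℂ (Fin (n i))) : ℝ :=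
  (∑ k, p k * (p k - 1) * ‖w₀ k‖ ^ (2 * (p k - 2)) * ‖⟪w₀ k, η k⟫‖ ^ 2)
    + (∑ k, p k * ‖w₀ k‖ ^ (2 * (p k - 1)) * ‖η k‖ ^ 2)
    + μ * Real.exp (-μ * ‖z₀‖ ^ 2) * ‖ζ‖ ^ 2
    - μ ^ 2 * Real.exp (-μ * ‖z₀‖ ^ 2) * ‖⟪z₀, ζ⟫‖ ^ 2

/-- Proposition 3.1(1) of Bi–Tu: at every point of the boundary stratum `b₀D`
(where `Σₖ ‖w_{(k)0}‖^{2pₖ} = e^{-μ‖z₀‖²}` and `w_{(j)0} ≠ 0` for every block `j`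
with `pⱼ ≠ 1`), the Levi form of `ρ` is positive definite on the complex tangent
space; hence `D` is strongly pseudoconvex along `b₀D`. -/
theorem leviForm_posDef_on_b₀
    (n₀ l : ℕ) (n : Fin l → ℕ) (hn : ∀ i, 0 < n i) (p : Fin l → ℝ) (hp : ∀ i, 0 < p i)
    (hp1 : ∀ i : Fin l, i.val ≠ 0 → p i ≠ 1) (μ : ℝ) (hμ : 0 < μ)
    (z₀ : EuclideanSpace ℂ (Fin n₀)) (w₀ : (i : Fin l) → EuclideanSpace ℂ (Fin (n i)))
    (hbd : ∑ k, ‖w₀ k‖ ^ (2 * p k) = Real.exp (-μ * ‖z₀‖ ^ 2))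
    (hw₀ : ∀ j, p j ≠ 1 → w₀ j ≠ 0)
    (ζ : EuclideanSpace ℂ (Fin n₀)) (η : (i : Fin l) → EuclideanSpace ℂ (Fin (n i)))
    (htan : ∑ k, ((p k * ‖w₀ k‖ ^ (2 * (p k - 1)) : ℝ) : ℂ) * ⟪w₀ k, η k⟫
      + ((μ * Real.exp (-μ * ‖z₀‖ ^ 2) : ℝ) : ℂ) * ⟪z₀, ζ⟫ = 0)
    (hT : ¬(ζ = 0 ∧ η = 0)) :
    0 < leviForm n₀ l n p μ z₀ w₀ ζ η := by
  classical
  have hepos : (0:ℝ) < Real.exp (-μ * ‖z₀‖ ^ 2) := Real.exp_pos _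
  set e := Real.exp (-μ * ‖z₀‖ ^ 2) with he
  have hl : (1:ℝ) ≤ (l:ℝ) := by
    rcases Nat.eq_zero_or_pos l with h0 | h
    · exfalso; subst h0; simp at hbd; linarith
    · exact_mod_cast h
  -- G k is the "middle" quantity p_k^2 ‖w₀k‖^{2(p_k-2)} |⟨w₀k,ηk⟩|^2
  set G : Fin l → ℝ := fun k => p k ^ 2 * ‖w₀ k‖ ^ (2 * (p k - 2)) * ‖(⟪w₀ k, η k⟫ : ℂ)‖ ^ 2
    with hG
  have hGnonneg : ∀ k, 0 ≤ G k := by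
    intro k
    have := Real.rpow_nonneg (norm_nonneg (w₀ k)) (2 * (p k - 2))
    positivity
  -- per-block inequality: G k ≤ T1 k + T2 k
  have hF1 : ∀ k, G k ≤ p k * (p k - 1) * ‖w₀ k‖ ^ (2 * (p k - 2)) * ‖(⟪w₀ k, η k⟫:ℂ)‖ ^ 2
      + p k * ‖w₀ k‖ ^ (2 * (p k - 1)) * ‖η k‖ ^ 2 := by
    intro k
    simp only [hG]
    have hb : ‖w₀ k‖ ^ (2 * (p k - 2)) * ‖(⟪w₀ k, η k⟫:ℂ)‖ ^ 2
        ≤ ‖w₀ k‖ ^ (2 * (p k - 1)) * ‖η k‖ ^ 2 := by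
      by_cases hw : w₀ k = 0
      · have hpk1 : p k = 1 := by by_contra hne; exact hw₀ k hne hw
        rw [hw, hpk1]
        simp [Real.rpow_zero]
      · have hr : 0 < ‖w₀ k‖ := norm_pos_iff.mpr hw
        have hcs : ‖(⟪w₀ k, η k⟫:ℂ)‖ ^ 2 ≤ ‖w₀ k‖ ^ 2 * ‖η k‖ ^ 2 := by
          have h1 := norm_inner_le_norm (𝕜 := ℂ) (w₀ k) (η k)
          nlinarith [norm_nonneg (⟪w₀ k, η k⟫ : ℂ), norm_nonneg (w₀ k), norm_nonneg (η k)]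
        have hexp : ‖w₀ k‖ ^ (2 * (p k - 2)) * ‖w₀ k‖ ^ ((2:ℕ):ℝ)
            = ‖w₀ k‖ ^ (2 * (p k - 1)) := by
          rw [← Real.rpow_add hr]
          congr 1
          push_cast
          ring
        calc ‖w₀ k‖ ^ (2 * (p k - 2)) * ‖(⟪w₀ k, η k⟫:ℂ)‖ ^ 2
            ≤ ‖w₀ k‖ ^ (2 * (p k - 2)) * (‖w₀ k‖ ^ 2 * ‖η k‖ ^ 2) :=
              mul_le_mul_of_nonneg_left hcs (Real.rpow_nonneg (norm_nonneg _) _)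
          _ = ‖w₀ k‖ ^ (2 * (p k - 1)) * ‖η k‖ ^ 2 := by
              rw [← hexp, Real.rpow_natCast]; ring
    nlinarith [mul_le_mul_of_nonneg_left hb (hp k).le]
  -- the Cauchy–Schwarz consequence of the tangency condition
  have hKEY : μ ^ 2 * e * ‖(⟪z₀, ζ⟫:ℂ)‖ ^ 2 ≤ ∑ k, G k := by
    set f : Fin l → ℝ := fun k => ‖w₀ k‖ ^ (p k) with hf
    set g : Fin l → ℝ := fun k => p k * ‖w₀ k‖ ^ (p k - 2) * ‖(⟪w₀ k, η k⟫ : ℂ)‖ with hg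
    have hfg : ∀ k, ‖(((p k * ‖w₀ k‖ ^ (2 * (p k - 1)) : ℝ) : ℂ) * ⟪w₀ k, η k⟫)‖
        = f k * g k := by
      intro k
      rw [norm_mul, Complex.norm_real, Real.norm_of_nonneg
        (mul_nonneg (hp k).le (Real.rpow_nonneg (norm_nonneg _) _))]
      by_cases hw : w₀ k = 0
      · simp [hf, hg, hw, Real.zero_rpow (ne_of_gt (hp k))]
      · have hr : 0 < ‖w₀ k‖ := norm_pos_iff.mpr hw
        simp only [hf, hg]
        rw [show (2 * (p k - 1)) = p k + (p k - 2) by ring, Real.rpow_add hr]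
        ring
    have hf2 : ∀ k, f k ^ 2 = ‖w₀ k‖ ^ (2 * p k) := by
      intro k
      simp only [hf]
      rw [← Real.rpow_natCast (‖w₀ k‖ ^ (p k)) 2, ← Real.rpow_mul (norm_nonneg _)]
      norm_num [mul_comm]
    have hg2 : ∀ k, g k ^ 2 = G k := by
      intro k
      simp only [hf, hg, hG]
      rw [mul_pow, mul_pow, ← Real.rpow_natCast (‖w₀ k‖ ^ (p k - 2)) 2,
        ← Real.rpow_mul (norm_nonneg _)]
      norm_num [mul_comm]
    -- rearrange the tangency condition
    have h1 : ∑ k, (((p k * ‖w₀ k‖ ^ (2 * (p k - 1)) : ℝ) : ℂ) * ⟪w₀ k, η k⟫)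
        = -(((μ * e : ℝ) : ℂ) * ⟪z₀, ζ⟫) := by
      linear_combination htan
    have hnorm : μ * e * ‖(⟪z₀, ζ⟫:ℂ)‖
        = ‖∑ k, (((p k * ‖w₀ k‖ ^ (2 * (p k - 1)) : ℝ) : ℂ) * ⟪w₀ k, η k⟫)‖ := by
      rw [h1, norm_neg, norm_mul, Complex.norm_real,
        Real.norm_of_nonneg (mul_nonneg hμ.le hepos.le)]
    have htri : ‖∑ k, (((p k * ‖w₀ k‖ ^ (2 * (p k - 1)) : ℝ) : ℂ) * ⟪w₀ k, η k⟫)‖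
        ≤ ∑ k, f k * g k := by
      refine le_trans (norm_sum_le _ _) ?_
      refine Finset.sum_le_sum fun k _ => ?_
      rw [hfg k]
    have hCS := Finset.sum_mul_sq_le_sq_mul_sq Finset.univ f g
    rw [Finset.sum_congr rfl (fun k _ => hf2 k), Finset.sum_congr rfl (fun k _ => hg2 k),
      hbd] at hCS
    have hsq : (μ * e * ‖(⟪z₀, ζ⟫:ℂ)‖) ^ 2 ≤ e * ∑ k, G k := by
      have h2 : μ * e * ‖(⟪z₀, ζ⟫:ℂ)‖ ≤ ∑ k, f k * g k := hnorm ▸ htri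
      have h3 : (0:ℝ) ≤ μ * e * ‖(⟪z₀, ζ⟫:ℂ)‖ := by positivity
      nlinarith
    nlinarith [hepos, sq_nonneg (μ * ‖(⟪z₀, ζ⟫:ℂ)‖)]
  -- now assemble
  unfold leviForm
  rw [← he]
  by_cases hz : ζ = 0
  · have hη : η ≠ 0 := fun h => hT ⟨hz, h⟩
    obtain ⟨j, hj⟩ : ∃ j, η j ≠ 0 := by
      by_contra h; push_neg at h; exact hη (funext fun j => h j)
    have hposj : 0 < p j * (p j - 1) * ‖w₀ j‖ ^ (2 * (p j - 2)) * ‖(⟪w₀ j, η j⟫:ℂ)‖ ^ 2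
        + p j * ‖w₀ j‖ ^ (2 * (p j - 1)) * ‖η j‖ ^ 2 := by
      by_cases hio : (⟪w₀ j, η j⟫ : ℂ) = 0
      · have hη2 : 0 < ‖η j‖ := norm_pos_iff.mpr hj
        have hc : 0 < ‖w₀ j‖ ^ (2 * (p j - 1)) := by
          by_cases hw : w₀ j = 0
          · have hpj : p j = 1 := by by_contra hne; exact hw₀ j hne hw
            rw [hw, hpj]; norm_num
          · exact Real.rpow_pos_of_pos (norm_pos_iff.mpr hw) _
        rw [hio]
        simp only [norm_zero]
        have : 0 < p j * ‖w₀ j‖ ^ (2 * (p j - 1)) * ‖η j‖ ^ 2 :=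
          mul_pos (mul_pos (hp j) hc) (pow_pos hη2 2)
        nlinarith
      · have hwj : w₀ j ≠ 0 := by
          intro h; apply hio; rw [h]; exact inner_zero_left _
        have hrj : 0 < ‖w₀ j‖ := norm_pos_iff.mpr hwj
        have hGpos : 0 < G j := by
          have h1 : 0 < ‖w₀ j‖ ^ (2 * (p j - 2)) := Real.rpow_pos_of_pos hrj _
          have h2 : 0 < ‖(⟪w₀ j, η j⟫:ℂ)‖ := norm_pos_iff.mpr hio
          have := hp j
          simp only [hG]
          positivity
        exact lt_of_lt_of_le hGpos (hF1 j)
    rw [hz]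
    simp only [inner_zero_right, norm_zero, ne_eq, OfNat.ofNat_ne_zero, not_false_eq_true,
      zero_pow, mul_zero, add_zero, sub_zero]
    rw [← Finset.sum_add_distrib]
    refine Finset.sum_pos' (fun k _ => le_trans (hGnonneg k) (hF1 k)) ⟨j, Finset.mem_univ j, hposj⟩
  · have hζ : 0 < ‖ζ‖ := norm_pos_iff.mpr hz
    have hsum : ∑ k, G k
        ≤ (∑ k, p k * (p k - 1) * ‖w₀ k‖ ^ (2 * (p k - 2)) * ‖(⟪w₀ k, η k⟫:ℂ)‖ ^ 2)
          + ∑ k, p k * ‖w₀ k‖ ^ (2 * (p k - 1)) * ‖η k‖ ^ 2 := by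
      rw [← Finset.sum_add_distrib]
      exact Finset.sum_le_sum fun k _ => hF1 k
    nlinarith [mul_pos (mul_pos hμ hepos) (pow_pos hζ 2)]
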